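/- For every odd dimension d ≥ 3 and every real r with 0 ≤ r ≤ 1/√(d−1), there exists a d×d complex density matrix ρ with S_R(ρ) = r and √d · S_I(ρ) = √(d−1) + r (i.e., the linear bound of Proposition 2 is saturated). In particular, the block-diagonal state with (d−1)/2 identical 2×2 blocks α·[[1, −i],[i, 1]] and final diagonal entry 1 − (d−1)α, for 1/d ≤ α ≤ 1/(d−1), has S_R = √(d−1)·(dα − 1) and S_I = √(d(d−1))·α. -/

import Mathlib

open Matrix
open scoped ComplexOrder

noncomputable section

/-- A density matrix: positive semidefinite with unit trace. -/
def IsDensityMatrix {d : ℕ} (ρ : Matrix (Fin d) (Fin d) ℂ) : Prop :=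
  ρ.PosSemidef ∧ ρ.trace = 1

/-- The real part `R = (d/2)(ρ + ρᵀ)`. -/
def Rpart (d : ℕ) (ρ : Matrix (Fin d) (Fin d) ℂ) : Matrix (Fin d) (Fin d) ℂ :=
  ((d : ℂ) / 2) • (ρ + ρ.transpose)

/-- The imaginary part `I = (d/2)(ρ − ρᵀ)`. -/
def Ipart (d : ℕ) (ρ : Matrix (Fin d) (Fin d) ℂ) : Matrix (Fin d) (Fin d) ℂ :=
  ((d : ℂ) / 2) • (ρ - ρ.transpose)

/-- `S_R = √(Tr(R²)/d − 1)`. -/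
def SR (d : ℕ) (ρ : Matrix (Fin d) (Fin d) ℂ) : ℝ :=
  Real.sqrt ((Rpart d ρ * Rpart d ρ).trace.re / d - 1)

/-- `S_I = √(Tr(I²)/d)`. -/
def SI (d : ℕ) (ρ : Matrix (Fin d) (Fin d) ℂ) : ℝ :=
  Real.sqrt ((Ipart d ρ * Ipart d ρ).trace.re / d)

/-- The block-diagonal state with `(d−1)/2` identical `2×2` blocks
`α·[[1, −i],[i, 1]]` (on index pairs `(2j, 2j+1)`) and final diagonal entry
`1 − (d−1)α`. -/
def blockState (d : ℕ) (α : ℝ) : Matrix (Fin d) (Fin d) ℂ :=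
  Matrix.of fun k l =>
    if k = l then
      (if (k : ℕ) = d - 1 then ((1 - ((d : ℝ) - 1) * α : ℝ) : ℂ) else ((α : ℝ) : ℂ))
    else if (k : ℕ) % 2 = 0 ∧ (l : ℕ) = (k : ℕ) + 1 then -Complex.I * (α : ℂ)
    else if (l : ℕ) % 2 = 0 ∧ (k : ℕ) = (l : ℕ) + 1 then Complex.I * (α : ℂ)
    else 0

/-! Auxiliary lemmas -/

lemma sum_if_last' {d : ℕ} (hd : 0 < d) (a b : ℂ) :
    ∑ k : Fin d, (if (k : ℕ) = d - 1 then a else b) = a + (d - 1 : ℕ) * b := by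
  obtain ⟨n, rfl⟩ : ∃ n, d = n + 1 := ⟨d - 1, by omega⟩
  rw [Fin.sum_univ_castSucc]
  have h1 : ∀ k : Fin n, ¬ ((k.castSucc : ℕ) = n + 1 - 1) := by
    intro k; have := k.is_lt; simp; omega
  simp only [h1, if_neg, if_false, Fin.val_last]
  simp [Finset.sum_const, add_comm]

def Bmat (d : ℕ) (α : ℝ) : Matrix (Fin d) (Fin d) ℂ :=
  Matrix.of fun k a =>
    if (k : ℕ) % 2 = 0 ∧ (a : ℕ) = (k : ℕ) then
      (if (k : ℕ) = d - 1 then ((Real.sqrt (1 - ((d : ℝ) - 1) * α) : ℝ) : ℂ)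
       else ((Real.sqrt α : ℝ) : ℂ))
    else if (k : ℕ) % 2 = 0 ∧ (a : ℕ) = (k : ℕ) + 1 then -Complex.I * ((Real.sqrt α : ℝ) : ℂ)
    else 0

set_option maxHeartbeats 2000000 in
lemma blockState_eq_factor (d : ℕ) (α : ℝ) (hd : 3 ≤ d) (hodd : d % 2 = 1)
    (h0 : 0 ≤ α) (h1 : ((d : ℝ) - 1) * α ≤ 1) :
    blockState d α = (Bmat d α)ᴴ * Bmat d α := by
  have hsq : ((Real.sqrt α : ℝ) : ℂ) * ((Real.sqrt α : ℝ) : ℂ) = (α : ℂ) := by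
    rw [← Complex.ofReal_mul, Real.mul_self_sqrt h0]
  have hsq2 : ((Real.sqrt (1 - ((d : ℝ) - 1) * α) : ℝ) : ℂ) *
      ((Real.sqrt (1 - ((d : ℝ) - 1) * α) : ℝ) : ℂ) = ((1 - ((d : ℝ) - 1) * α : ℝ) : ℂ) := by
    rw [← Complex.ofReal_mul, Real.mul_self_sqrt (by linarith)]
  ext a b
  rw [Matrix.mul_apply]
  have ha := a.is_lt; have hb := b.is_lt
  have hk0lt : (a : ℕ) - (a : ℕ) % 2 < d := by omega
  rw [Finset.sum_eq_single (⟨(a : ℕ) - (a : ℕ) % 2, hk0lt⟩ : Fin d)]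
  · simp only [conjTranspose_apply, Bmat, blockState, Matrix.of_apply, Fin.ext_iff]
    split_ifs <;>
      first
        | (exfalso; omega)
        | (simp only [Complex.star_def, _root_.map_mul, map_neg, Complex.conj_I,
            Complex.conj_ofReal, star_zero, mul_zero, zero_mul, neg_zero, neg_mul, mul_neg,
            neg_neg]
           try first
             | rfl
             | exact hsq.symm
             | exact hsq2.symm
             | linear_combination -Complex.I * hsq
             | linear_combination Complex.I * hsq
             | linear_combination hsq -
                 ((Real.sqrt α : ℝ) : ℂ) * ((Real.sqrt α : ℝ) : ℂ) * Complex.I_mul_I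
             | linear_combination hsq +
                 ((Real.sqrt α : ℝ) : ℂ) * ((Real.sqrt α : ℝ) : ℂ) * Complex.I_mul_I
             | linear_combination -hsq +
                 ((Real.sqrt α : ℝ) : ℂ) * ((Real.sqrt α : ℝ) : ℂ) * Complex.I_mul_I
             | linear_combination -hsq -
                 ((Real.sqrt α : ℝ) : ℂ) * ((Real.sqrt α : ℝ) : ℂ) * Complex.I_mul_I)
  · intro k _ hk
    have hz : Bmat d α k a = 0 := by
      simp only [Bmat, Matrix.of_apply]
      split_ifs with h1' h2' h3'
      · exact absurd (Fin.val_injective (show (k : ℕ) = (a : ℕ) - (a : ℕ) % 2 by omega)) hk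
      · exact absurd (Fin.val_injective (show (k : ℕ) = (a : ℕ) - (a : ℕ) % 2 by omega)) hk
      · exact absurd (Fin.val_injective (show (k : ℕ) = (a : ℕ) - (a : ℕ) % 2 by omega)) hk
      · rfl
    simp [conjTranspose_apply, hz]
  · intro h; exact absurd (Finset.mem_univ _) h

def diagf (d : ℕ) (α : ℝ) (k : Fin d) : ℝ :=
  if (k : ℕ) = d - 1 then 1 - ((d : ℝ) - 1) * α else α

lemma blockState_trace (d : ℕ) (α : ℝ) (hd : 3 ≤ d) : (blockState d α).trace = 1 := by
  have hcd : ((d - 1 : ℕ) : ℂ) = (d : ℂ) - 1 := by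
    push_cast [Nat.cast_sub (by omega : 1 ≤ d)]; ring
  have h : ∀ k : Fin d, blockState d α k k =
      (if (k : ℕ) = d - 1 then ((1 - ((d : ℝ) - 1) * α : ℝ) : ℂ) else ((α : ℝ) : ℂ)) := by
    intro k; simp [blockState]
  rw [Matrix.trace]
  calc ∑ k, (blockState d α).diag k
      = ∑ k : Fin d, (if (k : ℕ) = d - 1 then ((1 - ((d : ℝ) - 1) * α : ℝ) : ℂ)
          else ((α : ℝ) : ℂ)) := Finset.sum_congr rfl (fun k _ => h k)
    _ = _ := by rw [sum_if_last' (by omega)]; rw [hcd]; push_cast; ring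

lemma Rpart_eq (d : ℕ) (α : ℝ) (hd : 3 ≤ d) :
    Rpart d (blockState d α) =
      Matrix.diagonal (fun k => (d : ℂ) * ((diagf d α k : ℝ) : ℂ)) := by
  ext i j
  have hi := i.is_lt; have hj := j.is_lt
  simp only [Rpart, Matrix.smul_apply, Matrix.add_apply, Matrix.transpose_apply, blockState,
    Matrix.of_apply, Matrix.diagonal, diagf, Fin.ext_iff, smul_eq_mul, apply_ite Complex.ofReal]
  split_ifs <;> (first | (exfalso; omega) | ring1)

lemma traceR (d : ℕ) (α : ℝ) (hd : 3 ≤ d) :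
    (Rpart d (blockState d α) * Rpart d (blockState d α)).trace =
      (((d : ℝ) ^ 2 * ((1 - ((d : ℝ) - 1) * α) ^ 2 + ((d : ℝ) - 1) * α ^ 2) : ℝ) : ℂ) := by
  have hcd : ((d - 1 : ℕ) : ℂ) = (d : ℂ) - 1 := by
    push_cast [Nat.cast_sub (by omega : 1 ≤ d)]; ring
  rw [Rpart_eq d α hd, Matrix.diagonal_mul_diagonal, Matrix.trace_diagonal]
  have h : ∀ k : Fin d, ((d : ℂ) * ((diagf d α k : ℝ) : ℂ)) * ((d : ℂ) * ((diagf d α k : ℝ) : ℂ))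
      = (if (k : ℕ) = d - 1 then ((d : ℂ) * ((1 - ((d : ℝ) - 1) * α : ℝ) : ℂ)) ^ 2
         else ((d : ℂ) * ((α : ℝ) : ℂ)) ^ 2) := by
    intro k; by_cases hk : (k : ℕ) = d - 1 <;> simp [diagf, hk] <;> ring
  calc (∑ k : Fin d, ((d : ℂ) * ((diagf d α k : ℝ) : ℂ)) * ((d : ℂ) * ((diagf d α k : ℝ) : ℂ)))
      = ∑ k : Fin d, (if (k : ℕ) = d - 1 then ((d : ℂ) * ((1 - ((d : ℝ) - 1) * α : ℝ) : ℂ)) ^ 2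
          else ((d : ℂ) * ((α : ℝ) : ℂ)) ^ 2) := Finset.sum_congr rfl (fun k _ => h k)
    _ = _ := by rw [sum_if_last' (by omega), hcd]; push_cast; ring

set_option maxHeartbeats 1000000 in
lemma traceI (d : ℕ) (α : ℝ) (hd : 3 ≤ d) (hodd : d % 2 = 1) :
    (Ipart d (blockState d α) * Ipart d (blockState d α)).trace =
      ((((d : ℝ) - 1) * (d : ℝ) ^ 2 * α ^ 2 : ℝ) : ℂ) := by
  have hcd : ((d - 1 : ℕ) : ℂ) = (d : ℂ) - 1 := by
    push_cast [Nat.cast_sub (by omega : 1 ≤ d)]; ring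
  have key : ∀ k : Fin d,
      (Ipart d (blockState d α) * Ipart d (blockState d α)) k k =
        (if (k : ℕ) = d - 1 then 0 else (((d : ℝ) ^ 2 * α ^ 2 : ℝ) : ℂ)) := by
    intro k
    rw [Matrix.mul_apply]
    have hklt := k.is_lt
    by_cases hk : (k : ℕ) = d - 1
    · rw [if_pos hk]
      apply Finset.sum_eq_zero
      intro l _
      have hl := l.is_lt
      have hz : Ipart d (blockState d α) k l = 0 := by
        simp only [Ipart, Matrix.smul_apply, Matrix.sub_apply, Matrix.transpose_apply,
          blockState, Matrix.of_apply, Fin.ext_iff, smul_eq_mul, and_true, true_and]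
        split_ifs <;> (first | ring1 | (exfalso; omega))
      rw [hz, zero_mul]
    · rw [if_neg hk]
      by_cases hpar : (k : ℕ) % 2 = 0
      · have hplt : (k : ℕ) + 1 < d := by omega
        set p : Fin d := ⟨(k : ℕ) + 1, hplt⟩ with hpdef
        have hp : (p : ℕ) = (k : ℕ) + 1 := rfl
        rw [Finset.sum_eq_single p]
        · simp only [Ipart, Matrix.smul_apply, Matrix.sub_apply, Matrix.transpose_apply,
            blockState, Matrix.of_apply, Fin.ext_iff, smul_eq_mul, and_true, true_and]
          split_ifs <;> (first
            | (exfalso; omega)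
            | (push_cast; linear_combination (-(d : ℂ) ^ 2 * (α : ℂ) ^ 2) * Complex.I_mul_I))
        · intro l _ hl
          have hll := l.is_lt
          have hz : Ipart d (blockState d α) k l = 0 := by
            simp only [Ipart, Matrix.smul_apply, Matrix.sub_apply, Matrix.transpose_apply,
              blockState, Matrix.of_apply, Fin.ext_iff, smul_eq_mul, and_true, true_and]
            split_ifs <;> (first
              | ring1
              | (exfalso; omega)
              | (exfalso; exact hl (Fin.val_injective (by omega))))
          rw [hz, zero_mul]
        · intro h; exact absurd (Finset.mem_univ _) h
      · have hplt : (k : ℕ) - 1 < d := by omega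
        set p : Fin d := ⟨(k : ℕ) - 1, hplt⟩ with hpdef
        have hp : (p : ℕ) = (k : ℕ) - 1 := rfl
        rw [Finset.sum_eq_single p]
        · simp only [Ipart, Matrix.smul_apply, Matrix.sub_apply, Matrix.transpose_apply,
            blockState, Matrix.of_apply, Fin.ext_iff, smul_eq_mul, and_true, true_and]
          split_ifs <;> (first
            | (exfalso; omega)
            | (push_cast; linear_combination (-(d : ℂ) ^ 2 * (α : ℂ) ^ 2) * Complex.I_mul_I))
        · intro l _ hl
          have hll := l.is_lt
          have hz : Ipart d (blockState d α) k l = 0 := by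
            simp only [Ipart, Matrix.smul_apply, Matrix.sub_apply, Matrix.transpose_apply,
              blockState, Matrix.of_apply, Fin.ext_iff, smul_eq_mul, and_true, true_and]
            split_ifs <;> (first
              | ring1
              | (exfalso; omega)
              | (exfalso; exact hl (Fin.val_injective (by omega))))
          rw [hz, zero_mul]
        · intro h; exact absurd (Finset.mem_univ _) h
  rw [Matrix.trace]
  calc ∑ k, (Ipart d (blockState d α) * Ipart d (blockState d α)).diag k
      = ∑ k : Fin d, (if (k : ℕ) = d - 1 then 0 else (((d : ℝ) ^ 2 * α ^ 2 : ℝ) : ℂ)) :=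
        Finset.sum_congr rfl (fun k _ => key k)
    _ = _ := by rw [sum_if_last' (by omega), hcd]; push_cast; ring

/-- For every odd dimension `d ≥ 3` and every
`0 ≤ r ≤ 1/√(d−1)` there is a `d×d` density matrix with `S_R = r` and
`√d · S_I = √(d−1) + r` (the linear bound of Proposition 2 is saturated).
In particular, the block-diagonal state with `(d−1)/2` blocks `α·[[1,−i],[i,1]]`
and final diagonal entry `1 − (d−1)α`, for `1/d ≤ α ≤ 1/(d−1)`, is a density matrix
with `S_R = √(d−1)·(dα − 1)` and `S_I = √(d(d−1))·α`. -/
theorem linear_bound_saturated (d : ℕ) (hd : 3 ≤ d) (hdodd : Odd d) :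
    (∀ r : ℝ, 0 ≤ r → r ≤ 1 / Real.sqrt ((d : ℝ) - 1) →
      ∃ ρ : Matrix (Fin d) (Fin d) ℂ, IsDensityMatrix ρ ∧
        SR d ρ = r ∧ Real.sqrt d * SI d ρ = Real.sqrt ((d : ℝ) - 1) + r) ∧
    (∀ α : ℝ, 1 / (d : ℝ) ≤ α → α ≤ 1 / ((d : ℝ) - 1) →
      IsDensityMatrix (blockState d α) ∧
      SR d (blockState d α) = Real.sqrt ((d : ℝ) - 1) * ((d : ℝ) * α - 1) ∧
      SI d (blockState d α) = Real.sqrt ((d : ℝ) * ((d : ℝ) - 1)) * α) := by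
  have hodd : d % 2 = 1 := Nat.odd_iff.mp hdodd
  have hd3 : (3 : ℝ) ≤ (d : ℝ) := by exact_mod_cast hd
  have hd0 : (0 : ℝ) < (d : ℝ) := by linarith
  have hdm1 : (0 : ℝ) < (d : ℝ) - 1 := by linarith
  have main : ∀ α : ℝ, 1 / (d : ℝ) ≤ α → α ≤ 1 / ((d : ℝ) - 1) →
      IsDensityMatrix (blockState d α) ∧
      SR d (blockState d α) = Real.sqrt ((d : ℝ) - 1) * ((d : ℝ) * α - 1) ∧
      SI d (blockState d α) = Real.sqrt ((d : ℝ) * ((d : ℝ) - 1)) * α := by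
    intro α hα1 hα2
    have h0 : 0 ≤ α := le_trans (by positivity) hα1
    have h1 : ((d : ℝ) - 1) * α ≤ 1 := by
      have := (le_div_iff₀ hdm1).mp hα2
      linarith
    have hdα : 1 ≤ (d : ℝ) * α := by
      have := (div_le_iff₀ hd0).mp hα1
      linarith
    refine ⟨⟨?_, blockState_trace d α hd⟩, ?_, ?_⟩
    · rw [blockState_eq_factor d α hd hodd h0 h1]
      exact Matrix.posSemidef_conjTranspose_mul_self _
    · rw [SR, traceR d α hd, Complex.ofReal_re]
      have heq : (d : ℝ) ^ 2 * ((1 - ((d : ℝ) - 1) * α) ^ 2 + ((d : ℝ) - 1) * α ^ 2) / d - 1 =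
          ((d : ℝ) - 1) * ((d : ℝ) * α - 1) ^ 2 := by
        field_simp
        ring
      rw [heq, Real.sqrt_mul (by linarith), Real.sqrt_sq (by linarith)]
    · rw [SI, traceI d α hd hodd, Complex.ofReal_re]
      have heq : ((d : ℝ) - 1) * (d : ℝ) ^ 2 * α ^ 2 / d = ((d : ℝ) * ((d : ℝ) - 1)) * α ^ 2 := by
        field_simp
      rw [heq, Real.sqrt_mul (by positivity), Real.sqrt_sq h0]
  refine ⟨?_, main⟩
  intro r hr0 hr1
  set s := Real.sqrt ((d : ℝ) - 1) with hs
  have hs0 : 0 < s := Real.sqrt_pos.mpr hdm1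
  have hs2 : s * s = (d : ℝ) - 1 := Real.mul_self_sqrt (le_of_lt hdm1)
  have hr1' : r * s ≤ 1 := by
    have := (le_div_iff₀ hs0).mp hr1
    linarith
  set α := (s + r) / ((d : ℝ) * s) with hαdef
  have hα1 : 1 / (d : ℝ) ≤ α := by
    rw [hαdef, div_le_div_iff₀ hd0 (by positivity)]
    nlinarith [mul_nonneg hr0 (le_of_lt hd0)]
  have hα2 : α ≤ 1 / ((d : ℝ) - 1) := by
    rw [hαdef, div_le_div_iff₀ (by positivity) hdm1]
    nlinarith [mul_le_mul_of_nonneg_right hr1' (le_of_lt hs0), hs2, hs0]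
  obtain ⟨hdm, hSR, hSI⟩ := main α hα1 hα2
  refine ⟨blockState d α, hdm, ?_, ?_⟩
  · rw [hSR]
    have hda : (d : ℝ) * α = (s + r) / s := by
      rw [hαdef]; field_simp
    rw [hda]
    field_simp; ring
  · rw [hSI]
    have h1 : Real.sqrt ((d : ℝ) * ((d : ℝ) - 1)) = Real.sqrt (d : ℝ) * s :=
      Real.sqrt_mul (le_of_lt hd0) _
    rw [h1]
    have h2 : Real.sqrt (d : ℝ) * Real.sqrt (d : ℝ) = (d : ℝ) := Real.mul_self_sqrt hd0.le
    calc Real.sqrt (d : ℝ) * (Real.sqrt (d : ℝ) * s * α)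
        = (Real.sqrt (d : ℝ) * Real.sqrt (d : ℝ)) * (s * α) := by ring
      _ = (d : ℝ) * (s * α) := by rw [h2]
      _ = s + r := by rw [hαdef]; field_simp
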